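/- For the simplex system on ℝ^n with coefficient matrix (a_ij), suppose there is M with 0 ≤ M < 1 and a_ij ≤ M for all i, j. Then: (i) for every x ∈ ℝ^n, the inner product ⟨x, f(x)⟩ ≤ |x|²(1 − (1 − M)|x|²); and (ii) for every R with R² ≥ 1/(1 − M), the closed ball of radius R is positively invariant, i.e. every differentiable solution x : [0, ∞) → ℝ^n of x'(t) = f(x(t)) with |x(0)| ≤ R satisfies |x(t)| ≤ R for all t ≥ 0. -/

import Mathlib

open scoped BigOperators RealInnerProductSpace

/-- The simplex system vector field on `ℝ^n` with coefficient matrix `a`: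
`f_j(x) = x_j (1 - ∑ i, x_i² + ∑ i, a i j * x_i²)`. -/
noncomputable def simplexField {n : ℕ} (a : Fin n → Fin n → ℝ)
    (x : EuclideanSpace ℝ (Fin n)) : EuclideanSpace ℝ (Fin n) :=
  WithLp.toLp 2 (fun j => x j * (1 - ∑ i, (x i) ^ 2 + ∑ i, a i j * (x i) ^ 2))

lemma simplex_inner_bound {n : ℕ} (a : Fin n → Fin n → ℝ) (M : ℝ)
    (ha : ∀ i j : Fin n, a i j ≤ M) (x : EuclideanSpace ℝ (Fin n)) :
    ⟪x, simplexField a x⟫ ≤ ‖x‖ ^ 2 * (1 - (1 - M) * ‖x‖ ^ 2) := by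
  set S := ∑ i, (x i) ^ 2 with hSdef
  have hS : ‖x‖ ^ 2 = S := by
    rw [← real_inner_self_eq_norm_sq, PiLp.inner_apply]
    simp [RCLike.inner_apply, ← pow_two]
    exact hSdef.symm
  have hS0 : 0 ≤ S := Finset.sum_nonneg fun i _ => sq_nonneg _
  have hinner : ⟪x, simplexField a x⟫ =
      ∑ j, (x j) ^ 2 * (1 - S + ∑ i, a i j * (x i) ^ 2) := by
    rw [PiLp.inner_apply]
    refine Finset.sum_congr rfl fun j _ => ?_
    simp [simplexField, RCLike.inner_apply]
    ring
  rw [hinner, hS]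
  have hbound : ∀ j ∈ Finset.univ, (x j) ^ 2 * (1 - S + ∑ i, a i j * (x i) ^ 2)
      ≤ (x j) ^ 2 * (1 - S + M * S) := by
    intro j _
    apply mul_le_mul_of_nonneg_left _ (sq_nonneg _)
    have : ∑ i, a i j * (x i) ^ 2 ≤ ∑ i, M * (x i) ^ 2 :=
      Finset.sum_le_sum fun i _ => mul_le_mul_of_nonneg_right (ha i j) (sq_nonneg _)
    rw [← Finset.mul_sum] at this
    linarith
  calc ∑ j, (x j) ^ 2 * (1 - S + ∑ i, a i j * (x i) ^ 2)
      ≤ ∑ j, (x j) ^ 2 * (1 - S + M * S) := Finset.sum_le_sum hbound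
    _ = S * (1 - S + M * S) := by rw [← Finset.sum_mul]
    _ = S * (1 - (1 - M) * S) := by ring

/-- If all coefficients satisfy `a i j ≤ M` with `0 ≤ M < 1`, then
(i) `⟨x, f(x)⟩ ≤ |x|² (1 - (1 - M)|x|²)` for all `x`, and
(ii) every closed ball of radius `R` with `R² ≥ 1/(1-M)` is positively invariant for
the simplex system. -/
theorem stmt7 {n : ℕ} (a : Fin n → Fin n → ℝ) (M : ℝ)
    (hM0 : 0 ≤ M) (hM1 : M < 1) (ha : ∀ i j : Fin n, a i j ≤ M) :
    (∀ x : EuclideanSpace ℝ (Fin n),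
        ⟪x, simplexField a x⟫ ≤ ‖x‖ ^ 2 * (1 - (1 - M) * ‖x‖ ^ 2)) ∧
    (∀ R : ℝ, 1 / (1 - M) ≤ R ^ 2 →
        ∀ x : ℝ → EuclideanSpace ℝ (Fin n),
          (∀ t ∈ Set.Ici (0 : ℝ),
            HasDerivWithinAt x (simplexField a (x t)) (Set.Ici (0 : ℝ)) t) →
          ‖x 0‖ ≤ R → ∀ t ≥ (0 : ℝ), ‖x t‖ ≤ R) := by
  have hM : (0 : ℝ) < 1 - M := by linarith
  refine ⟨simplex_inner_bound a M ha, ?_⟩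
  intro R hR x hx hx0 t ht
  set c : ℝ := R ^ 2 with hc
  have hc1 : 1 ≤ (1 - M) * c := by
    rw [div_le_iff₀ hM] at hR
    linarith [hR]
  have hcpos : 0 < c := by nlinarith
  set K : ℝ := 2 - 4 * (1 - M) * c with hK
  -- the squared norm function
  set g : ℝ → ℝ := fun s => ‖x s‖ ^ 2 - c with hg
  have hg' : ∀ s ∈ Set.Ici (0 : ℝ),
      HasDerivWithinAt g (2 * ⟪x s, simplexField a (x s)⟫) (Set.Ici (0 : ℝ)) s := by
    intro s hs
    have h1 : HasDerivWithinAt (fun u => ⟪x u, x u⟫)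
        (⟪x s, simplexField a (x s)⟫ + ⟪simplexField a (x s), x s⟫) (Set.Ici (0 : ℝ)) s :=
      (hx s hs).inner ℝ (hx s hs)
    have h2 : HasDerivWithinAt (fun u => ⟪x u, x u⟫ - c)
        (⟪x s, simplexField a (x s)⟫ + ⟪simplexField a (x s), x s⟫) (Set.Ici (0 : ℝ)) s :=
      h1.sub_const c
    have heq : (fun u => ⟪x u, x u⟫ - c) = g := by
      funext u; rw [hg]; rw [real_inner_self_eq_norm_sq]
    rw [heq] at h2
    convert h2 using 1
    rw [real_inner_comm (simplexField a (x s)) (x s)]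
    ring
  -- Grönwall on [0, t]
  have key : ∀ s ∈ Set.Icc (0 : ℝ) t, g s ≤ gronwallBound 0 K 0 (s - 0) := by
    apply le_gronwallBound_of_liminf_deriv_right_le
      (f' := fun s => 2 * ⟪x s, simplexField a (x s)⟫)
    · -- continuity
      intro s hs
      exact (hg' s hs.1).continuousWithinAt.mono Set.Icc_subset_Ici_self
    · intro s hs r hr
      have h := (hg' s hs.1).mono (Set.Ici_subset_Ici.2 hs.1)
      exact h.liminf_right_slope_le hr
    · -- initial condition
      have : ‖x 0‖ ^ 2 ≤ R ^ 2 := by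
        have h0 : (0 : ℝ) ≤ ‖x 0‖ := norm_nonneg _
        nlinarith
      simp [hg]
      linarith
    · -- the differential inequality
      intro s hs
      have hb := simplex_inner_bound a M ha (x s)
      have hn : (0 : ℝ) ≤ ‖x s‖ ^ 2 := sq_nonneg _
      set u : ℝ := ‖x s‖ ^ 2
      have : 2 * ⟪x s, simplexField a (x s)⟫ ≤ 2 * (u * (1 - (1 - M) * u)) := by linarith
      refine this.trans ?_
      have hgs : g s = u - c := rfl
      rw [hgs, add_zero, hK]
      nlinarith [sq_nonneg (u - c), hcpos, hc1, hM]
  have hgt := key t ⟨ht, le_refl t⟩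
  rw [sub_zero, gronwallBound_ε0_δ0] at hgt
  have hxt : ‖x t‖ ^ 2 ≤ R ^ 2 := by
    have : g t = ‖x t‖ ^ 2 - c := rfl
    rw [this] at hgt; linarith
  have hR0 : 0 ≤ R := by nlinarith [norm_nonneg (x 0)]
  nlinarith [norm_nonneg (x t)]
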